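/- Let g:I→ℝ be a function of bounded variation with total variation V. Let T:I→I be an IET and x, x' ∈ J where J is the base of a Rohlin tower by intervals of height h (so the intervals T^j J, 0 ≤ j < h, are pairwise disjoint). Then for any 0 ≤ h' ≤ h, |∑_{j=0}^{h'-1} g(T^j x) - ∑_{j=0}^{h'-1} g(T^j x')| ≤ V. -/

import Mathlib

open Set

theorem stmt12_aux (g : ℝ → ℝ) (s : Set ℝ) (V : ℝ) (hV0 : 0 ≤ V)
    (hV : eVariationOn g s = ENNReal.ofReal V)
    (T : ℝ → ℝ) (a b : ℝ) (hab : a < b) (h : ℕ)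
    (hsub : ∀ j < h, T^[j] '' Set.Ioo a b ⊆ s)
    (htrans : ∀ j < h, ∃ c : ℝ, ∀ y ∈ Set.Ioo a b, T^[j] y = y + c)
    (hdisj : ∀ i j, i < h → j < h → i ≠ j →
      Disjoint (T^[i] '' Set.Ioo a b) (T^[j] '' Set.Ioo a b))
    (x x' : ℝ) (hx : x ∈ Set.Ioo a b) (hx' : x' ∈ Set.Ioo a b)
    (h' : ℕ) (hh' : h' ≤ h) (hxx : x ≤ x') :
    |∑ j ∈ Finset.range h', g (T^[j] x) - ∑ j ∈ Finset.range h', g (T^[j] x')| ≤ V := by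
  rcases Nat.eq_zero_or_pos h' with rfl | hpos
  · simpa using hV0
  -- translation constants
  set c : ℕ → ℝ := fun j => if hj : j < h then (htrans j hj).choose else 0 with hcdef
  have hc : ∀ j, ∀ hj : j < h, ∀ y ∈ Set.Ioo a b, T^[j] y = y + c j := by
    intro j hj y hy
    simp only [hcdef, dif_pos hj]
    exact (htrans j hj).choose_spec y hy
  have himg : ∀ j, j < h → T^[j] '' Set.Ioo a b = Set.Ioo (a + c j) (b + c j) := by
    intro j hj
    rw [show T^[j] '' Set.Ioo a b = (fun y => y + c j) '' Set.Ioo a b from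
      Set.image_congr (fun y hy => hc j hj y hy), Set.image_add_const_Ioo]
  have hsep : ∀ i j, i < h → j < h → i ≠ j → b + c i ≤ a + c j ∨ b + c j ≤ a + c i := by
    intro i j hi hj hij
    have hd := hdisj i j hi hj hij
    rw [himg i hi, himg j hj] at hd
    by_contra hcon
    push_neg at hcon
    obtain ⟨h1, h2⟩ := hcon
    have hmem : (max (a + c i) (a + c j) + min (b + c i) (b + c j)) / 2 ∈
        Set.Ioo (a + c i) (b + c i) ∩ Set.Ioo (a + c j) (b + c j) := by
      constructor <;> constructor <;>
      · simp only [lt_div_iff₀ (by norm_num : (0:ℝ) < 2), div_lt_iff₀ (by norm_num : (0:ℝ) < 2)]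
        rcases le_total (a + c i) (a + c j) with hle | hle <;>
        rcases le_total (b + c i) (b + c j) with hle' | hle' <;>
        simp [max_eq_left, max_eq_right, min_eq_left, min_eq_right, hle, hle'] <;> linarith
    exact absurd hmem (by rw [Set.disjoint_iff_inter_eq_empty] at hd; simp [hd])
  -- sorting permutation
  set σ : Equiv.Perm (Fin h') := Tuple.sort (fun k : Fin h' => c k) with hσdef
  have hσmono : Monotone ((fun k : Fin h' => c (k : ℕ)) ∘ σ) := Tuple.monotone_sort _
  set d : ℕ → ℝ := fun k => c (σ ⟨min k (h' - 1), by omega⟩) with hddef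
  have hdk : ∀ k (hk : k < h'), d k = c (σ ⟨k, hk⟩) := by
    intro k hk
    have hfin : (⟨min k (h' - 1), by omega⟩ : Fin h') = ⟨k, hk⟩ := by
      simp only [Fin.mk.injEq]
      omega
    simp only [hddef, hfin]
  have hdmono : ∀ k l : ℕ, k ≤ l → l ≤ h' - 1 → d k ≤ d l := by
    intro k l hkl hl
    have h1 : min k (h' - 1) = k := by omega
    have h2 : min l (h' - 1) = l := by omega
    have := hσmono (a := ⟨min k (h' - 1), by omega⟩) (b := ⟨min l (h' - 1), by omega⟩)
      (by simp [Fin.le_def, h1, h2]; omega)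
    exact this
  have hdsep : ∀ k, k + 1 ≤ h' - 1 → b + d k ≤ a + d (k + 1) := by
    intro k hk
    have hkh : k < h' := by omega
    have hk1h : k + 1 < h' := by omega
    have hne : (σ ⟨k, hkh⟩ : ℕ) ≠ (σ ⟨k + 1, hk1h⟩ : ℕ) := by
      intro hcon
      have : (⟨k, hkh⟩ : Fin h') = ⟨k + 1, hk1h⟩ := σ.injective (Fin.ext hcon)
      simp [Fin.ext_iff] at this
    have hlt1 : ((σ ⟨k, hkh⟩ : Fin h') : ℕ) < h := lt_of_lt_of_le (Fin.is_lt _) hh'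
    have hlt2 : ((σ ⟨k + 1, hk1h⟩ : Fin h') : ℕ) < h := lt_of_lt_of_le (Fin.is_lt _) hh'
    have hmon : d k ≤ d (k + 1) := hdmono k (k + 1) (by omega) hk
    rw [hdk k hkh, hdk (k + 1) hk1h]
    rcases hsep _ _ hlt1 hlt2 hne with h1 | h1
    · exact h1
    · exfalso
      rw [hdk k hkh, hdk (k + 1) hk1h] at hmon
      linarith
  -- sequence for variation
  set u : ℕ → ℝ := fun n =>
    if n + 1 < 2 * h' then (if n % 2 = 0 then x else x') + d (n / 2) else x' + d (h' - 1)
    with hudef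
  have hu : Monotone u := by
    apply monotone_nat_of_le_succ
    intro n
    simp only [hudef]
    rcases lt_or_ge (n + 2) (2 * h') with hn | hn
    · rw [if_pos (show n + 1 < 2 * h' by omega), if_pos (show n + 1 + 1 < 2 * h' from hn)]
      rcases Nat.even_or_odd n with he | ho
      · have hmod : n % 2 = 0 := Nat.even_iff.mp he
        have hdiv : (n + 1) / 2 = n / 2 := by omega
        rw [if_pos hmod, if_neg (show ¬ ((n + 1) % 2 = 0) by omega), hdiv]
        linarith
      · have hmod : n % 2 = 1 := Nat.odd_iff.mp ho
        have hdiv : (n + 1) / 2 = n / 2 + 1 := by omega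
        rw [if_neg (show ¬ (n % 2 = 0) by omega),
          if_pos (show (n + 1) % 2 = 0 by omega), hdiv]
        have hsep' : b + d (n / 2) ≤ a + d (n / 2 + 1) := hdsep _ (by omega)
        have := hx.1
        have := hx'.2
        linarith
    · rcases lt_or_ge (n + 1) (2 * h') with hn1 | hn1
      · have hmod : n % 2 = 0 := by omega
        have hdiv : n / 2 = h' - 1 := by omega
        rw [if_pos (show n + 1 < 2 * h' from hn1),
          if_neg (show ¬ (n + 1 + 1 < 2 * h') by omega), if_pos hmod, hdiv]
        linarith
      · rw [if_neg (show ¬ (n + 1 < 2 * h') by omega),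
          if_neg (show ¬ (n + 1 + 1 < 2 * h') by omega)]
  have hmem : ∀ (y : ℝ), y ∈ Set.Ioo a b → ∀ m : ℕ, y + d m ∈ s := by
    intro y hy m
    set j := (σ ⟨min m (h' - 1), by omega⟩ : Fin h') with hjdef
    have hjh : (j : ℕ) < h := lt_of_lt_of_le j.is_lt hh'
    apply hsub j hjh
    exact ⟨y, hy, hc j hjh y hy⟩
  have hus : ∀ n, u n ∈ s := by
    intro n
    simp only [hudef]
    split_ifs with h1 h2
    · exact hmem x hx _
    · exact hmem x' hx' _
    · exact hmem x' hx' _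
  -- variation bound
  have hvar := eVariationOn.sum_le (f := g) (n := 2 * h') hu hus
  rw [hV] at hvar
  -- extract even-indexed terms
  have hsub2 : (Finset.range h').image (fun k => 2 * k) ⊆ Finset.range (2 * h') := by
    intro i hi
    simp only [Finset.mem_image, Finset.mem_range] at hi ⊢
    obtain ⟨k, hk, rfl⟩ := hi
    omega
  have hsum1 : ∑ k ∈ Finset.range h', edist (g (u (2 * k + 1))) (g (u (2 * k)))
      ≤ ENNReal.ofReal V := by
    calc ∑ k ∈ Finset.range h', edist (g (u (2 * k + 1))) (g (u (2 * k)))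
        = ∑ i ∈ (Finset.range h').image (fun k => 2 * k), edist (g (u (i + 1))) (g (u i)) := by
          rw [Finset.sum_image (by intro a _ b _ hab2; simp only at hab2; omega)]
      _ ≤ ∑ i ∈ Finset.range (2 * h'), edist (g (u (i + 1))) (g (u i)) :=
          Finset.sum_le_sum_of_subset hsub2
      _ ≤ ENNReal.ofReal V := hvar
  have huval : ∀ k, k < h' → u (2 * k) = x + d k ∧ u (2 * k + 1) = x' + d k := by
    intro k hk
    have hdiv : 2 * k / 2 = k := by omega
    constructor
    · simp only [hudef]
      rw [if_pos (show 2 * k + 1 < 2 * h' by omega),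
        if_pos (show 2 * k % 2 = 0 by omega), hdiv]
    · rcases lt_or_ge (2 * k + 2) (2 * h') with h1 | h1
      · have hdiv2 : (2 * k + 1) / 2 = k := by omega
        simp only [hudef]
        rw [if_pos (show 2 * k + 1 + 1 < 2 * h' from h1),
          if_neg (show ¬ ((2 * k + 1) % 2 = 0) by omega), hdiv2]
      · have hk1 : k = h' - 1 := by omega
        simp only [hudef]
        rw [if_neg (show ¬ (2 * k + 1 + 1 < 2 * h') by omega), hk1]
  have hsum2 : ∑ k ∈ Finset.range h', edist (g (x' + d k)) (g (x + d k))
      ≤ ENNReal.ofReal V := by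
    refine le_trans (le_of_eq ?_) hsum1
    apply Finset.sum_congr rfl
    intro k hk
    rw [Finset.mem_range] at hk
    rw [(huval k hk).1, (huval k hk).2]
  -- reindex by the permutation
  have hsum3 : ∑ j ∈ Finset.range h', edist (g (x' + c j)) (g (x + c j))
      ≤ ENNReal.ofReal V := by
    refine le_trans (le_of_eq ?_) hsum2
    rw [← Fin.sum_univ_eq_sum_range (fun j => edist (g (x' + c j)) (g (x + c j))),
        ← Fin.sum_univ_eq_sum_range (fun k => edist (g (x' + d k)) (g (x + d k)))]
    rw [← Equiv.sum_comp σ (fun j : Fin h' => edist (g (x' + c (j : ℕ))) (g (x + c (j : ℕ))))]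
    apply Finset.sum_congr rfl
    intro k _
    rw [hdk k k.is_lt]
  -- convert to real
  have hTx : ∀ j ∈ Finset.range h', T^[j] x = x + c j := fun j hj =>
    hc j (lt_of_lt_of_le (Finset.mem_range.mp hj) hh') x hx
  have hTx' : ∀ j ∈ Finset.range h', T^[j] x' = x' + c j := fun j hj =>
    hc j (lt_of_lt_of_le (Finset.mem_range.mp hj) hh') x' hx'
  have habs : |∑ j ∈ Finset.range h', g (T^[j] x) - ∑ j ∈ Finset.range h', g (T^[j] x')|
      ≤ ∑ j ∈ Finset.range h', |g (x' + c j) - g (x + c j)| := by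
    rw [← Finset.sum_sub_distrib]
    refine le_trans (Finset.abs_sum_le_sum_abs _ _) ?_
    apply Finset.sum_le_sum
    intro j hj
    rw [hTx j hj, hTx' j hj, abs_sub_comm]
  refine le_trans habs ?_
  have hof : ENNReal.ofReal (∑ j ∈ Finset.range h', |g (x' + c j) - g (x + c j)|)
      ≤ ENNReal.ofReal V := by
    rw [ENNReal.ofReal_sum_of_nonneg (fun j _ => abs_nonneg _)]
    refine le_trans (le_of_eq ?_) hsum3
    apply Finset.sum_congr rfl
    intro j _
    rw [edist_dist, Real.dist_eq]
  rw [ENNReal.ofReal_le_ofReal_iff hV0] at hof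
  exact hof

theorem stmt12 (g : ℝ → ℝ) (s : Set ℝ) (V : ℝ) (hV0 : 0 ≤ V)
    (hV : eVariationOn g s = ENNReal.ofReal V)
    (T : ℝ → ℝ) (a b : ℝ) (hab : a < b) (h : ℕ)
    (hsub : ∀ j < h, T^[j] '' Set.Ioo a b ⊆ s)
    (htrans : ∀ j < h, ∃ c : ℝ, ∀ y ∈ Set.Ioo a b, T^[j] y = y + c)
    (hdisj : ∀ i j, i < h → j < h → i ≠ j →
      Disjoint (T^[i] '' Set.Ioo a b) (T^[j] '' Set.Ioo a b))
    (x x' : ℝ) (hx : x ∈ Set.Ioo a b) (hx' : x' ∈ Set.Ioo a b)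
    (h' : ℕ) (hh' : h' ≤ h) :
    |∑ j ∈ Finset.range h', g (T^[j] x) - ∑ j ∈ Finset.range h', g (T^[j] x')| ≤ V := by
  rcases le_total x x' with hxx | hxx
  · exact stmt12_aux g s V hV0 hV T a b hab h hsub htrans hdisj x x' hx hx' h' hh' hxx
  · rw [abs_sub_comm]
    exact stmt12_aux g s V hV0 hV T a b hab h hsub htrans hdisj x' x hx' hx h' hh' hxx
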